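/- Let n ≥ 1, let A : ℝⁿ → ℝⁿ be a linear map, x ∈ ℝⁿ and ε > 0. Then the average integral over the ball B_ε(x) satisfies ⨍_{B_ε(x)} ⟨A(y−x), y−x⟩ dy = (ε²/(n+2)) · trace(A). In particular, taking A to be the Hessian D²v(x) of a twice differentiable function, ⨍_{B_ε(x)} ⟨D²v(x)(y−x), y−x⟩ dy = (ε²/(n+2)) Δv(x). -/

import Mathlib

open MeasureTheory Metric Set

private lemma aux_intOn (n : ℕ) (i j : Fin n) (ε : ℝ) :
    IntegrableOn (fun z : EuclideanSpace ℝ (Fin n) => z i * z j) (ball 0 ε) volume := by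
  have hc : Continuous (fun z : EuclideanSpace ℝ (Fin n) => z i * z j) := by fun_prop
  exact ((hc.locallyIntegrable).integrableOn_isCompact (isCompact_closedBall _ _)).mono_set
    ball_subset_closedBall

private lemma aux_cross_zero (n : ℕ) (i j : Fin n) (hij : i ≠ j) (ε : ℝ) :
    ∫ z in ball (0 : EuclideanSpace ℝ (Fin n)) ε, z i * z j = 0 := by
  classical
  set e : EuclideanSpace ℝ (Fin n) ≃ₗᵢ[ℝ] EuclideanSpace ℝ (Fin n) :=
    LinearIsometryEquiv.piLpCongrRight 2
      (fun k => if k = i then LinearIsometryEquiv.neg ℝ else LinearIsometryEquiv.refl ℝ ℝ) with he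
  have happ : ∀ (z : EuclideanSpace ℝ (Fin n)) (k : Fin n),
      e z k = if k = i then -(z k) else z k := by
    intro z k
    simp only [he, LinearIsometryEquiv.piLpCongrRight_apply]
    by_cases h : k = i
    · subst h; simp
    · simp [h]
  have hball : e ⁻¹' (ball 0 ε) = ball 0 ε := by
    ext z
    simp [mem_ball, dist_zero_right, e.norm_map]
  have key := e.measurePreserving.setIntegral_preimage_emb e.toHomeomorph.measurableEmbedding
    (fun z : EuclideanSpace ℝ (Fin n) => z i * z j) (ball 0 ε)
  rw [hball] at key
  have hneg : ∀ z : EuclideanSpace ℝ (Fin n), e z i * e z j = -(z i * z j) := by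
    intro z; rw [happ, happ]; simp [hij.symm]
  simp only [hneg, integral_neg] at key
  linarith

private lemma aux_diag_eq (n : ℕ) (i j : Fin n) (ε : ℝ) :
    ∫ z in ball (0 : EuclideanSpace ℝ (Fin n)) ε, (z i) ^ 2
      = ∫ z in ball (0 : EuclideanSpace ℝ (Fin n)) ε, (z j) ^ 2 := by
  set e : EuclideanSpace ℝ (Fin n) ≃ₗᵢ[ℝ] EuclideanSpace ℝ (Fin n) :=
    LinearIsometryEquiv.piLpCongrLeft 2 ℝ ℝ (Equiv.swap i j) with he
  have hball : e ⁻¹' (ball 0 ε) = ball 0 ε := by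
    ext z
    simp [mem_ball, dist_zero_right, e.norm_map]
  have key := e.measurePreserving.setIntegral_preimage_emb e.toHomeomorph.measurableEmbedding
    (fun z : EuclideanSpace ℝ (Fin n) => (z i) ^ 2) (ball 0 ε)
  rw [hball] at key
  rw [← key]
  congr 1
  ext z
  have : e z i = z j := by
    simp only [he, LinearIsometryEquiv.piLpCongrLeft_apply, Equiv.piCongrLeft'_apply,
      Equiv.symm_swap]
    rw [Equiv.swap_apply_left]
  rw [this]

private lemma aux_normsq_int (n : ℕ) (hn : 1 ≤ n) (ε : ℝ) (hε : 0 < ε) :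
    ∫ z in ball (0 : EuclideanSpace ℝ (Fin n)) ε, ‖z‖ ^ 2
      = n * (volume (ball (0 : EuclideanSpace ℝ (Fin n)) 1)).toReal * (ε ^ (n + 2) / (n + 2)) := by
  haveI : Nonempty (Fin n) := ⟨⟨0, hn⟩⟩
  set f : ℝ → ℝ := fun r => if r < ε then r ^ 2 else 0 with hf
  have h1 : ∫ z : EuclideanSpace ℝ (Fin n), f ‖z‖
      = ∫ z in ball (0 : EuclideanSpace ℝ (Fin n)) ε, ‖z‖ ^ 2 := by
    rw [← integral_indicator measurableSet_ball]
    congr 1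
    ext z
    simp [hf, indicator, mem_ball, dist_zero_right]
  have h2 := MeasureTheory.integral_fun_norm_addHaar (volume : Measure (EuclideanSpace ℝ (Fin n))) f
  rw [h1, finrank_euclideanSpace_fin] at h2
  rw [h2]
  have h3 : ∫ y in Ioi (0 : ℝ), y ^ (n - 1) • f y = ε ^ (n + 2) / (n + 2) := by
    have heq : ∀ y ∈ Ioi (0:ℝ), y ^ (n - 1) • f y
        = Set.indicator (Iio ε) (fun y => y ^ (n + 1)) y := by
      intro y hy
      simp only [hf, smul_eq_mul, indicator, mem_Iio]
      by_cases h : y < ε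
      · simp only [if_pos h]
        rw [← pow_add]
        congr 1
        omega
      · simp [h]
    rw [setIntegral_congr_fun measurableSet_Ioi heq,
      setIntegral_indicator measurableSet_Iio]
    have : Ioi (0:ℝ) ∩ Iio ε = Ioo 0 ε := by ext y; simp [and_comm]
    rw [this, ← integral_Ioc_eq_integral_Ioo,
      ← intervalIntegral.integral_of_le hε.le, integral_pow]
    push_cast
    rw [zero_pow (by positivity)]
    ring
  rw [h3, nsmul_eq_mul, smul_eq_mul]
  rw [measureReal_def]
  ring

private lemma aux_diag_val (n : ℕ) (hn : 1 ≤ n) (i : Fin n) (ε : ℝ) (hε : 0 < ε) :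
    ∫ z in ball (0 : EuclideanSpace ℝ (Fin n)) ε, (z i) ^ 2
      = (volume (ball (0 : EuclideanSpace ℝ (Fin n)) 1)).toReal * (ε ^ (n + 2) / (n + 2)) := by
  have hsum : ∑ j : Fin n, ∫ z in ball (0 : EuclideanSpace ℝ (Fin n)) ε, (z j) ^ 2
      = ∫ z in ball (0 : EuclideanSpace ℝ (Fin n)) ε, ‖z‖ ^ 2 := by
    rw [← integral_finset_sum]
    · congr 1
      ext z
      rw [← Real.sqrt_sq (norm_nonneg z), EuclideanSpace.norm_eq,
        Real.sqrt_sq (by positivity), Real.sq_sqrt (by positivity)]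
      congr 1
      ext j
      rw [Real.norm_eq_abs, sq_abs]
    · intro j _
      have := aux_intOn n j j ε
      simpa [sq, IntegrableOn] using this
  have hconst : ∑ j : Fin n, ∫ z in ball (0 : EuclideanSpace ℝ (Fin n)) ε, (z j) ^ 2
      = n * ∫ z in ball (0 : EuclideanSpace ℝ (Fin n)) ε, (z i) ^ 2 := by
    rw [Finset.sum_congr rfl (fun j _ => aux_diag_eq n j i ε)]
    simp [Finset.sum_const, mul_comm]
  have hn' : (0:ℝ) < n := by exact_mod_cast hn
  have hkey := hsum.trans (aux_normsq_int n hn ε hε)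
  rw [hconst] at hkey
  have h2 : (0:ℝ) < (n:ℝ) + 2 := by positivity
  field_simp at hkey ⊢
  all_goals nlinarith [hkey]

private lemma aux_trace (n : ℕ) (A : EuclideanSpace ℝ (Fin n) →ₗ[ℝ] EuclideanSpace ℝ (Fin n)) :
    LinearMap.trace ℝ (EuclideanSpace ℝ (Fin n)) A
      = ∑ i : Fin n, (A (EuclideanSpace.single i (1:ℝ))) i := by
  classical
  rw [LinearMap.trace_eq_matrix_trace ℝ ((EuclideanSpace.basisFun (Fin n) ℝ).toBasis) A,
    Matrix.trace]
  refine Finset.sum_congr rfl fun i _ => ?_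
  simp [Matrix.diag, LinearMap.toMatrix_apply, OrthonormalBasis.coe_toBasis,
    OrthonormalBasis.coe_toBasis_repr_apply, EuclideanSpace.basisFun_repr,
    EuclideanSpace.basisFun_apply]

private lemma aux_expand (n : ℕ) (A : EuclideanSpace ℝ (Fin n) →ₗ[ℝ] EuclideanSpace ℝ (Fin n))
    (z : EuclideanSpace ℝ (Fin n)) :
    (inner ℝ (A z) z : ℝ)
      = ∑ i : Fin n, ∑ j : Fin n, (A (EuclideanSpace.single i (1:ℝ))) j * (z i * z j) := by
  have hz : z = ∑ i : Fin n, z i • EuclideanSpace.single i (1:ℝ) := by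
    have := (EuclideanSpace.basisFun (Fin n) ℝ).sum_repr z
    simp only [EuclideanSpace.basisFun_repr, EuclideanSpace.basisFun_apply] at this
    exact this.symm
  have hAz : A z = ∑ i : Fin n, z i • A (EuclideanSpace.single i (1:ℝ)) := by
    conv_lhs => rw [hz]
    rw [map_sum]
    exact Finset.sum_congr rfl fun i _ => _root_.map_smul A _ _
  rw [hAz, sum_inner]
  refine Finset.sum_congr rfl fun i _ => ?_
  rw [real_inner_smul_left, PiLp.inner_apply]
  simp only [RCLike.inner_apply, conj_trivial]
  rw [Finset.mul_sum]
  refine Finset.sum_congr rfl fun j _ => ?_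
  ring

/-- Mean value of the quadratic form `⟨A(y−x), y−x⟩` over the ball `B_ε(x)` equals
`ε²/(n+2) · trace A`. -/
theorem average_quadratic_form_over_ball
    (n : ℕ) (hn : 1 ≤ n)
    (A : EuclideanSpace ℝ (Fin n) →ₗ[ℝ] EuclideanSpace ℝ (Fin n))
    (x : EuclideanSpace ℝ (Fin n)) (ε : ℝ) (hε : 0 < ε) :
    (⨍ y in ball x ε, (inner ℝ (A (y - x)) (y - x) : ℝ)) =
      ε ^ 2 / ((n : ℝ) + 2) * LinearMap.trace ℝ (EuclideanSpace ℝ (Fin n)) A := by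
  classical
  haveI : Nonempty (Fin n) := ⟨⟨0, hn⟩⟩
  set μ₁ := (volume (ball (0 : EuclideanSpace ℝ (Fin n)) 1)).toReal with hμ₁
  -- translation
  have htrans : ∫ y in ball x ε, (inner ℝ (A (y - x)) (y - x) : ℝ)
      = ∫ z in ball (0 : EuclideanSpace ℝ (Fin n)) ε, (inner ℝ (A z) z : ℝ) := by
    have hpre : (fun z : EuclideanSpace ℝ (Fin n) => z + x) ⁻¹' ball x ε = ball 0 ε := by
      ext z
      simp [mem_ball, dist_eq_norm]
    have h := (measurePreserving_add_right volume x).setIntegral_preimage_emb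
      (MeasurableEquiv.addRight x).measurableEmbedding
      (fun y : EuclideanSpace ℝ (Fin n) => (inner ℝ (A (y - x)) (y - x) : ℝ)) (ball x ε)
    rw [hpre] at h
    rw [← h]
    simp
  -- compute the integral
  have hint : ∫ z in ball (0 : EuclideanSpace ℝ (Fin n)) ε, (inner ℝ (A z) z : ℝ)
      = LinearMap.trace ℝ (EuclideanSpace ℝ (Fin n)) A * (μ₁ * (ε ^ (n + 2) / (n + 2))) := by
    have hrw : ∫ z in ball (0 : EuclideanSpace ℝ (Fin n)) ε, (inner ℝ (A z) z : ℝ)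
        = ∑ i : Fin n, ∑ j : Fin n, (A (EuclideanSpace.single i (1:ℝ))) j
            * ∫ z in ball (0 : EuclideanSpace ℝ (Fin n)) ε, z i * z j := by
      calc ∫ z in ball (0 : EuclideanSpace ℝ (Fin n)) ε, (inner ℝ (A z) z : ℝ)
          = ∫ z in ball (0 : EuclideanSpace ℝ (Fin n)) ε,
              ∑ i : Fin n, ∑ j : Fin n, (A (EuclideanSpace.single i (1:ℝ))) j * (z i * z j) := by
            congr 1; ext z; exact aux_expand n A z
        _ = ∑ i : Fin n, ∫ z in ball (0 : EuclideanSpace ℝ (Fin n)) ε,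
              ∑ j : Fin n, (A (EuclideanSpace.single i (1:ℝ))) j * (z i * z j) := by
            refine integral_finset_sum _ fun i _ => ?_
            exact integrable_finset_sum _ fun j _ => (aux_intOn n i j ε).const_mul _
        _ = ∑ i : Fin n, ∑ j : Fin n, ∫ z in ball (0 : EuclideanSpace ℝ (Fin n)) ε,
              (A (EuclideanSpace.single i (1:ℝ))) j * (z i * z j) := by
            refine Finset.sum_congr rfl fun i _ => ?_
            exact integral_finset_sum _ fun j _ => (aux_intOn n i j ε).const_mul _
        _ = _ := by
            refine Finset.sum_congr rfl fun i _ => Finset.sum_congr rfl fun j _ => ?_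
            exact integral_const_mul _ _
    rw [hrw]
    have hdiag : ∀ i : Fin n,
        ∑ j : Fin n, (A (EuclideanSpace.single i (1:ℝ))) j
            * ∫ z in ball (0 : EuclideanSpace ℝ (Fin n)) ε, z i * z j
          = (A (EuclideanSpace.single i (1:ℝ))) i * (μ₁ * (ε ^ (n + 2) / (n + 2))) := by
      intro i
      rw [Finset.sum_eq_single i]
      · have : ∫ z in ball (0 : EuclideanSpace ℝ (Fin n)) ε, z i * z i
            = μ₁ * (ε ^ (n + 2) / (n + 2)) := by
          rw [show (fun z : EuclideanSpace ℝ (Fin n) => z i * z i)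
              = fun z : EuclideanSpace ℝ (Fin n) => (z i) ^ 2 by ext z; ring]
          exact aux_diag_val n hn i ε hε
        rw [this]
      · intro j _ hji
        rw [aux_cross_zero n i j (Ne.symm hji) ε, mul_zero]
      · intro h; exact absurd (Finset.mem_univ i) h
    rw [Finset.sum_congr rfl fun i _ => hdiag i, ← Finset.sum_mul, ← aux_trace n A]
  -- volume of the ball
  have hvol : (volume (ball x ε)).toReal = ε ^ n * μ₁ := by
    rw [Measure.addHaar_ball volume x hε.le, finrank_euclideanSpace_fin, ENNReal.toReal_mul,
      ENNReal.toReal_ofReal (by positivity)]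
  have hμ₁pos : 0 < μ₁ := by
    rw [hμ₁]
    exact ENNReal.toReal_pos (measure_ball_pos volume 0 one_pos).ne' measure_ball_lt_top.ne
  rw [setAverage_eq, htrans, hint, measureReal_def, hvol, smul_eq_mul]
  have hεn : (0:ℝ) < ε ^ n := by positivity
  have h2 : (0:ℝ) < (n:ℝ) + 2 := by positivity
  have hpow : ε ^ (n + 2) = ε ^ n * ε ^ 2 := pow_add ε n 2
  rw [hpow]
  field_simp
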